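/- Define J₀ : ℝ → ℝ by J₀(x) = ∫₀¹ cos(x·cos(2πs)) ds. Then for every x ∈ [0, 2.4], J₀ is differentiable at x with derivative J₀'(x) = −∫₀¹ cos(2πs)·sin(x·cos(2πs)) ds, and this derivative satisfies J₀'(x) ≤ −x/8. -/

import Mathlib

noncomputable section
open Real intervalIntegral Set

lemma sin_ge_sub_cube' {u : ℝ} (hu : 0 ≤ u) : u - u ^ 3 / 6 ≤ Real.sin u := by
  have hmono : MonotoneOn (fun t : ℝ => Real.sin t - t + t ^ 3 / 6) (Set.Ici 0) := by
    apply monotoneOn_of_deriv_nonneg (convex_Ici 0)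
    · fun_prop
    · apply Differentiable.differentiableOn
      fun_prop
    · intro v hv
      have hd : HasDerivAt (fun t : ℝ => Real.sin t - t + t ^ 3 / 6)
          (Real.cos v - 1 + 3 * v ^ 2 / 6) v := by
        have h1 := (Real.hasDerivAt_sin v).sub (hasDerivAt_id v)
        have h2 : HasDerivAt (fun t : ℝ => t ^ 3 / 6) (3 * v ^ 2 / 6) v := by
          simpa using (hasDerivAt_pow 3 v).div_const 6
        exact h1.add h2
      rw [hd.deriv]
      have := Real.one_sub_sq_div_two_le_cos (x := v)
      nlinarith
  have h0 : (0 : ℝ) ∈ Set.Ici (0 : ℝ) := Set.mem_Ici.mpr le_rfl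
  have := hmono h0 hu hu
  simp only [Real.sin_zero] at this
  nlinarith

lemma pointwise_ineq {x : ℝ} (hx : 0 ≤ x) (c : ℝ) :
    x * c ^ 2 - x ^ 3 * c ^ 4 / 6 ≤ c * Real.sin (x * c) := by
  have hu : 0 ≤ x * |c| := mul_nonneg hx (abs_nonneg c)
  have h1 := sin_ge_sub_cube' hu
  have h2 : c * Real.sin (x * c) = |c| * Real.sin (x * |c|) := by
    rcases abs_cases c with ⟨h, _⟩ | ⟨h, _⟩
    · rw [h]
    · rw [h]
      have : x * -c = -(x * c) := by ring
      rw [this, Real.sin_neg]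
      ring
  have h3 := mul_le_mul_of_nonneg_left h1 (abs_nonneg c)
  have hc2 : |c| * |c| = c ^ 2 := by rw [abs_mul_abs_self]; ring
  have hc4 : |c| ^ 4 = c ^ 4 := by rw [← abs_pow, abs_of_nonneg (by positivity)]
  rw [h2]
  calc x * c ^ 2 - x ^ 3 * c ^ 4 / 6
      = |c| * (x * |c| - (x * |c|) ^ 3 / 6) := by
        rw [show |c| * (x * |c| - (x * |c|) ^ 3 / 6)
            = x * (|c| * |c|) - x ^ 3 * |c| ^ 4 / 6 by ring, hc2, hc4]
    _ ≤ |c| * Real.sin (x * |c|) := h3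

/-- The Bessel function of the first kind of order `0`. -/
noncomputable def J0 (x : ℝ) : ℝ :=
  ∫ s in (0:ℝ)..1, Real.cos (x * Real.cos (2 * Real.pi * s))

lemma J0_hasDerivAt (x : ℝ) :
    HasDerivAt J0
      (-∫ s in (0:ℝ)..1, Real.cos (2 * Real.pi * s) *
          Real.sin (x * Real.cos (2 * Real.pi * s))) x := by
  have key := intervalIntegral.hasDerivAt_integral_of_dominated_loc_of_deriv_le
    (μ := MeasureTheory.volume) (a := (0:ℝ)) (b := 1)
    (F := fun y t => Real.cos (y * Real.cos (2 * Real.pi * t)))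
    (F' := fun y t => -(Real.cos (2 * Real.pi * t) *
      Real.sin (y * Real.cos (2 * Real.pi * t))))
    (x₀ := x) (bound := fun _ => 1) (s := Set.univ) Filter.univ_mem
    (Filter.Eventually.of_forall fun y =>
      (Continuous.aestronglyMeasurable (by fun_prop)))
    ((Continuous.intervalIntegrable (by fun_prop) _ _))
    (Continuous.aestronglyMeasurable (by fun_prop))
    (Filter.Eventually.of_forall fun t _ y _ => by
      rw [norm_neg, Real.norm_eq_abs, abs_mul]
      exact mul_le_one₀ (Real.abs_cos_le_one _) (abs_nonneg _) (Real.abs_sin_le_one _))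
    ((Continuous.intervalIntegrable continuous_const _ _))
    (Filter.Eventually.of_forall fun t _ y _ => by
      have := (hasDerivAt_mul_const (Real.cos (2 * Real.pi * t))).cos (x := y)
      exact this.congr_deriv (by ring))
  have h := key.2
  rw [intervalIntegral.integral_neg] at h
  exact h
lemma int_cos_sq : ∫ s in (0:ℝ)..1, Real.cos (2 * Real.pi * s) ^ 2 = 1 / 2 := by
  have h2π : (2 * Real.pi) ≠ 0 := by positivity
  have h := intervalIntegral.integral_comp_mul_left (a := (0:ℝ)) (b := 1)
    (fun u => Real.cos u ^ 2) h2π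
  rw [h, mul_zero, mul_one]
  have h2 : (∫ u in (0:ℝ)..(2*Real.pi), Real.cos u ^ 2) = Real.pi := by
    rw [integral_cos_sq]
    rw [Real.sin_two_pi, Real.sin_zero]
    ring
  rw [h2, smul_eq_mul]
  field_simp

lemma int_cos_quart : ∫ s in (0:ℝ)..1, Real.cos (2 * Real.pi * s) ^ 4 = 3 / 8 := by
  have h2π : (2 * Real.pi) ≠ 0 := by positivity
  have h := intervalIntegral.integral_comp_mul_left (a := (0:ℝ)) (b := 1)
    (fun u => Real.cos u ^ 4) h2π
  rw [h, mul_zero, mul_one]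
  have h4 : ∫ u in (0:ℝ)..(2 * Real.pi), Real.cos u ^ 4 = 3 * Real.pi / 4 := by
    have h5 := integral_cos_pow (a := (0:ℝ)) (b := 2 * Real.pi) (n := 2)
    norm_num [Real.sin_two_pi] at h5
    rw [h5]
    ring
  rw [h4, smul_eq_mul]
  have hπ : Real.pi ≠ 0 := Real.pi_ne_zero
  field_simp
  ring

/-- On `[0, 2.4]`, `J₀` is differentiable with derivative
`J₀'(x) = −∫₀¹ cos(2πs)·sin(x·cos(2πs)) ds`, and `J₀'(x) ≤ −x/8`. -/
theorem stmt16 :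
    ∀ x ∈ Set.Icc (0:ℝ) 2.4,
      HasDerivAt J0
        (-∫ s in (0:ℝ)..1, Real.cos (2 * Real.pi * s) *
            Real.sin (x * Real.cos (2 * Real.pi * s))) x ∧
      (-∫ s in (0:ℝ)..1, Real.cos (2 * Real.pi * s) *
          Real.sin (x * Real.cos (2 * Real.pi * s))) ≤ -x / 8 := by
  intro x hx
  obtain ⟨hx0, hx24⟩ := hx
  refine ⟨J0_hasDerivAt x, ?_⟩
  have hlow : ∫ s in (0:ℝ)..1, (x * Real.cos (2 * Real.pi * s) ^ 2
      - x ^ 3 * Real.cos (2 * Real.pi * s) ^ 4 / 6) = x / 2 - x ^ 3 / 16 := by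
    rw [intervalIntegral.integral_sub ((Continuous.intervalIntegrable (by fun_prop) _ _))
      ((Continuous.intervalIntegrable (by fun_prop) _ _))]
    have h1 : ∫ s in (0:ℝ)..1, x * Real.cos (2 * Real.pi * s) ^ 2 = x * (1/2) := by
      rw [intervalIntegral.integral_const_mul, int_cos_sq]
    have h2 : ∫ s in (0:ℝ)..1, x ^ 3 * Real.cos (2 * Real.pi * s) ^ 4 / 6
        = x ^ 3 / 6 * (3/8) := by
      have he : ∀ s : ℝ, x ^ 3 * Real.cos (2 * Real.pi * s) ^ 4 / 6
          = x ^ 3 / 6 * Real.cos (2 * Real.pi * s) ^ 4 := fun s => by ring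
      simp_rw [he]
      rw [intervalIntegral.integral_const_mul, int_cos_quart]
    rw [h1, h2]; ring
  have hmono : x / 2 - x ^ 3 / 16 ≤ ∫ s in (0:ℝ)..1,
      Real.cos (2 * Real.pi * s) * Real.sin (x * Real.cos (2 * Real.pi * s)) := by
    rw [← hlow]
    apply intervalIntegral.integral_mono_on (by norm_num)
      ((Continuous.intervalIntegrable (by fun_prop) _ _))
      ((Continuous.intervalIntegrable (by fun_prop) _ _))
    intro s _
    exact pointwise_ineq hx0 (Real.cos (2 * Real.pi * s))
  have hx24' : x ≤ 12 / 5 := by norm_num at hx24 ⊢; linarith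
  have h6 : (0:ℝ) ≤ 6 - x ^ 2 := by nlinarith
  have hfin : x / 8 ≤ x / 2 - x ^ 3 / 16 := by nlinarith [mul_nonneg hx0 h6]
  linarith

end
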